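/- The effective tensor is strictly monotone: if ξ₁, ξ₂ ∈ M with ξ₁ ≠ ξ₂ and v_{ξ₁}, v_{ξ₂} ∈ S solve the cell problems for ξ₁ and ξ₂ respectively, then (A^eff(ξ₁) − A^eff(ξ₂))·(ξ₁ − ξ₂) > 0. -/

import Mathlib

open MeasureTheory ENNReal
open scoped RealInnerProductSpace

/-- `Md d`: the space of symmetric `d × d` real matrices, identified (as in the paper)
with the Euclidean space `ℝ^{d(d+1)/2}`. -/
abbrev Md (d : ℕ) : Type := EuclideanSpace ℝ (Fin (d * (d + 1) / 2))

/-- strict monotonicity of the effective tensor, Lemma `l_eff-tenz`: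
if `ξ₁ ≠ ξ₂` and `v_{ξ₁}, v_{ξ₂} ∈ S` solve the corresponding cell problems, then
`(A^eff(ξ₁) − A^eff(ξ₂))·(ξ₁ − ξ₂) > 0`. -/
theorem stmt13
    {d : ℕ} (hd : 1 ≤ d)
    {Ω : Type*} [MeasurableSpace Ω] (P : Measure Ω) [IsProbabilityMeasure P]
    (p : Ω → ℝ) (hp : Measurable p)
    (α β : ℝ) (hα : 1 < α) (hαp : ∀ ω, α ≤ p ω) (hpβ : ∀ ω, p ω ≤ β)
    (A : Ω → Md d → Md d)
    (hAmeas : ∀ ξ : Md d, Measurable (fun ω => A ω ξ))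
    (hAcont : ∀ ω, Continuous (A ω))
    (hAmono : ∀ ω (ξ₁ ξ₂ : Md d), ξ₁ ≠ ξ₂ → 0 < ⟪A ω ξ₁ - A ω ξ₂, ξ₁ - ξ₂⟫)
    (c₁ : ℝ) (hc₁ : 0 < c₁)
    (hAgrowth : ∀ ω (ξ : Md d), ‖A ω ξ‖ ^ (p ω / (p ω - 1)) ≤ c₁ * ‖ξ‖ ^ p ω + c₁)
    -- `S` is a linear subspace of the measurable functions `Ω → M` with finite
    -- `p(⬝)`-integral and zero mean:
    (S : Set (Ω → Md d))
    (hSmeas : ∀ w ∈ S, Measurable w)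
    (hSfin : ∀ w ∈ S, ∫⁻ ω, ENNReal.ofReal (‖w ω‖ ^ p ω) ∂P < ⊤)
    (hSzero : (0 : Ω → Md d) ∈ S)
    (hSadd : ∀ w₁ ∈ S, ∀ w₂ ∈ S, w₁ + w₂ ∈ S)
    (hSsmul : ∀ (r : ℝ), ∀ w ∈ S, r • w ∈ S)
    (hSmean : ∀ w ∈ S, ∫ ω, w ω ∂P = 0)
    (ξ₁ ξ₂ : Md d) (hne : ξ₁ ≠ ξ₂)
    (v₁ v₂ : Ω → Md d) (hv₁ : v₁ ∈ S) (hv₂ : v₂ ∈ S)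
    (hsol₁ : ∀ θ ∈ S, ∫ ω, ⟪A ω (ξ₁ + v₁ ω), θ ω⟫ ∂P = 0)
    (hsol₂ : ∀ θ ∈ S, ∫ ω, ⟪A ω (ξ₂ + v₂ ω), θ ω⟫ ∂P = 0) :
    0 < ⟪(∫ ω, A ω (ξ₁ + v₁ ω) ∂P) - ∫ ω, A ω (ξ₂ + v₂ ω) ∂P, ξ₁ - ξ₂⟫ := by
  have h1p : ∀ ω, 1 < p ω := fun ω => hα.trans_le (hαp ω)
  have hq1 : ∀ ω, 1 ≤ p ω / (p ω - 1) := fun ω =>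
    (one_le_div (by linarith [h1p ω])).mpr (by linarith [h1p ω])
  have hconj : ∀ ω, (p ω / (p ω - 1)).HolderConjugate (p ω) := fun ω =>
    (Real.HolderConjugate.conjExponent (h1p ω)).symm
  -- the test function w = v₁ - v₂
  set w : Ω → Md d := v₁ + (-1 : ℝ) • v₂ with hwdef
  have hw : w ∈ S := hSadd v₁ hv₁ _ (hSsmul (-1) v₂ hv₂)
  have hwω : ∀ ω, w ω = v₁ ω - v₂ ω := by
    intro ω; simp [hwdef, sub_eq_add_neg]
  -- measurability of ω ↦ A ω (ξ + v ω)
  have hBmeas : ∀ (ξ : Md d) (v : Ω → Md d), Measurable v →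
      Measurable (fun ω => A ω (ξ + v ω)) := by
    intro ξ v hv
    have hun : Measurable (Function.uncurry fun (η : Md d) (ω : Ω) => A ω η) :=
      measurable_uncurry_of_continuous_of_measurable (fun ω => hAcont ω) hAmeas
    exact hun.comp ((measurable_const.add hv).prodMk measurable_id)
  -- integrability of ‖w'‖^p for w' ∈ S
  have hSint : ∀ w' ∈ S, Integrable (fun ω => ‖w' ω‖ ^ p ω) P := by
    intro w' hw'
    have hm : Measurable fun ω => ‖w' ω‖ ^ p ω := ((hSmeas w' hw').norm).pow hp
    refine ⟨hm.aestronglyMeasurable, ?_⟩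
    rw [hasFiniteIntegral_iff_ofReal
      (Filter.Eventually.of_forall fun ω => Real.rpow_nonneg (norm_nonneg _) _)]
    exact hSfin w' hw'
  -- pointwise growth bound
  have key : ∀ (ξ : Md d) (ω : Ω) (x : Md d),
      ‖A ω (ξ + x)‖ ^ (p ω / (p ω - 1)) ≤
        (c₁ * 2 ^ β * (1 + ‖ξ‖) ^ β + c₁) + (c₁ * 2 ^ β) * ‖x‖ ^ p ω := by
    intro ξ ω x
    have ht0 : (0:ℝ) ≤ p ω := by linarith [h1p ω]
    have hm0 : (0:ℝ) ≤ max ‖ξ‖ ‖x‖ := le_max_of_le_left (norm_nonneg _)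
    have h1 : ‖ξ + x‖ ^ p ω ≤ (2 * max ‖ξ‖ ‖x‖) ^ p ω := by
      apply Real.rpow_le_rpow (norm_nonneg _) _ ht0
      calc ‖ξ + x‖ ≤ ‖ξ‖ + ‖x‖ := norm_add_le _ _
        _ ≤ 2 * max ‖ξ‖ ‖x‖ := by
            rcases le_total ‖ξ‖ ‖x‖ with h | h
            · simp [max_eq_right h]; linarith
            · simp [max_eq_left h]; linarith
    have h2 : (2 * max ‖ξ‖ ‖x‖) ^ p ω = 2 ^ p ω * (max ‖ξ‖ ‖x‖) ^ p ω :=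
      Real.mul_rpow (by norm_num) hm0
    have h3 : (2:ℝ) ^ p ω ≤ 2 ^ β :=
      Real.rpow_le_rpow_of_exponent_le one_le_two (hpβ ω)
    have h4 : (max ‖ξ‖ ‖x‖) ^ p ω ≤ (1 + ‖ξ‖) ^ β + ‖x‖ ^ p ω := by
      rcases max_cases ‖ξ‖ ‖x‖ with ⟨he, _⟩ | ⟨he, _⟩ <;> rw [he]
      · have : ‖ξ‖ ^ p ω ≤ (1 + ‖ξ‖) ^ β := by
          calc ‖ξ‖ ^ p ω ≤ (1 + ‖ξ‖) ^ p ω :=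
                Real.rpow_le_rpow (norm_nonneg _) (by linarith) ht0
            _ ≤ (1 + ‖ξ‖) ^ β :=
                Real.rpow_le_rpow_of_exponent_le (by linarith [norm_nonneg ξ]) (hpβ ω)
        have := Real.rpow_nonneg (norm_nonneg x) (p ω)
        linarith
      · have := Real.rpow_nonneg (by positivity : (0:ℝ) ≤ 1 + ‖ξ‖) β
        linarith
    have h5 : ‖ξ + x‖ ^ p ω ≤ 2 ^ β * ((1 + ‖ξ‖) ^ β + ‖x‖ ^ p ω) := by
      have hmt := Real.rpow_nonneg hm0 (p ω)
      have h2b : (0:ℝ) ≤ 2 ^ β := Real.rpow_nonneg (by norm_num) β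
      calc ‖ξ + x‖ ^ p ω ≤ 2 ^ p ω * (max ‖ξ‖ ‖x‖) ^ p ω := by rw [← h2]; exact h1
        _ ≤ 2 ^ β * (max ‖ξ‖ ‖x‖) ^ p ω := by
            exact mul_le_mul_of_nonneg_right h3 hmt
        _ ≤ 2 ^ β * ((1 + ‖ξ‖) ^ β + ‖x‖ ^ p ω) := by
            exact mul_le_mul_of_nonneg_left h4 h2b
    calc ‖A ω (ξ + x)‖ ^ (p ω / (p ω - 1)) ≤ c₁ * ‖ξ + x‖ ^ p ω + c₁ := hAgrowth ω _
      _ ≤ c₁ * (2 ^ β * ((1 + ‖ξ‖) ^ β + ‖x‖ ^ p ω)) + c₁ :=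
          by nlinarith [h5, hc₁.le]
      _ = (c₁ * 2 ^ β * (1 + ‖ξ‖) ^ β + c₁) + (c₁ * 2 ^ β) * ‖x‖ ^ p ω := by ring
  -- a ≤ 1 + a^q
  have self_le : ∀ (ω : Ω) (a : ℝ), 0 ≤ a → a ≤ 1 + a ^ (p ω / (p ω - 1)) := by
    intro ω a ha
    rcases le_or_gt a 1 with h | h
    · have := Real.rpow_nonneg ha (p ω / (p ω - 1)); linarith
    · have h1 : a = a ^ (1:ℝ) := (Real.rpow_one a).symm
      have h2 : a ^ (1:ℝ) ≤ a ^ (p ω / (p ω - 1)) :=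
        Real.rpow_le_rpow_of_exponent_le h.le (hq1 ω)
      rw [Real.rpow_one] at h2
      linarith
  -- integrability of B
  have hBint : ∀ (ξ : Md d) (v : Ω → Md d), v ∈ S →
      Integrable (fun ω => A ω (ξ + v ω)) P := by
    intro ξ v hv
    have hmeas := hBmeas ξ v (hSmeas v hv)
    refine Integrable.mono'
      (g := fun ω => (1 + (c₁ * 2 ^ β * (1 + ‖ξ‖) ^ β + c₁)) + (c₁ * 2 ^ β) * ‖v ω‖ ^ p ω)
      (((integrable_const _).add ((hSint v hv).const_mul _))) hmeas.aestronglyMeasurable ?_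
    filter_upwards with ω
    have := key ξ ω (v ω)
    have h2 := self_le ω ‖A ω (ξ + v ω)‖ (norm_nonneg _)
    linarith
  -- integrability of inner products against S elements
  have hinnerS : ∀ (ξ : Md d) (v : Ω → Md d), v ∈ S → ∀ w' ∈ S,
      Integrable (fun ω => ⟪A ω (ξ + v ω), w' ω⟫) P := by
    intro ξ v hv w' hw'
    have hmeas : Measurable fun ω => ⟪A ω (ξ + v ω), w' ω⟫ :=
      (hBmeas ξ v (hSmeas v hv)).inner (hSmeas w' hw')
    refine Integrable.mono'
      (g := fun ω => ((c₁ * 2 ^ β * (1 + ‖ξ‖) ^ β + c₁) + (c₁ * 2 ^ β) * ‖v ω‖ ^ p ω)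
        + ‖w' ω‖ ^ p ω)
      ((((integrable_const _).add ((hSint v hv).const_mul _)).add (hSint w' hw'))) 
      hmeas.aestronglyMeasurable ?_
    filter_upwards with ω
    have hy := Real.young_inequality_of_nonneg (norm_nonneg (A ω (ξ + v ω)))
      (norm_nonneg (w' ω)) (hconj ω)
    have hk := key ξ ω (v ω)
    have hd1 : ‖A ω (ξ + v ω)‖ ^ (p ω / (p ω - 1)) / (p ω / (p ω - 1)) ≤
        ‖A ω (ξ + v ω)‖ ^ (p ω / (p ω - 1)) :=
      div_le_self (Real.rpow_nonneg (norm_nonneg _) _) (hq1 ω)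
    have hd2 : ‖w' ω‖ ^ p ω / p ω ≤ ‖w' ω‖ ^ p ω :=
      div_le_self (Real.rpow_nonneg (norm_nonneg _) _) (by linarith [h1p ω])
    have habs : ‖⟪A ω (ξ + v ω), w' ω⟫‖ ≤ ‖A ω (ξ + v ω)‖ * ‖w' ω‖ := by
      rw [Real.norm_eq_abs]; exact abs_real_inner_le_norm _ _
    linarith
  -- the nonnegative integrand
  set c : Md d := ξ₁ - ξ₂ with hc
  set B₁ : Ω → Md d := fun ω => A ω (ξ₁ + v₁ ω) with hB₁
  set B₂ : Ω → Md d := fun ω => A ω (ξ₂ + v₂ ω) with hB₂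
  set g : Ω → ℝ := fun ω => (⟪B₁ ω, c⟫ - ⟪B₂ ω, c⟫) + (⟪B₁ ω, w ω⟫ - ⟪B₂ ω, w ω⟫)
    with hg
  have hvec : ∀ ω, (ξ₁ + v₁ ω) - (ξ₂ + v₂ ω) = c + w ω := by
    intro ω; rw [hwω, hc]; abel
  have hgpt : ∀ ω, g ω = ⟪B₁ ω - B₂ ω, (ξ₁ + v₁ ω) - (ξ₂ + v₂ ω)⟫ := by
    intro ω
    rw [hvec ω, inner_sub_left, inner_add_right, inner_add_right]
    simp only [hg]; ring
  have hg0 : ∀ ω, 0 ≤ g ω := by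
    intro ω
    rw [hgpt ω]
    rcases eq_or_ne (ξ₁ + v₁ ω) (ξ₂ + v₂ ω) with h | h
    · simp [hB₁, hB₂, h]
    · exact (hAmono ω _ _ h).le
  -- integrability of the pieces
  have hI₁c : Integrable (fun ω => ⟪B₁ ω, c⟫) P := by
    have h := Integrable.const_inner (𝕜 := ℝ) c (hBint ξ₁ v₁ hv₁)
    refine h.congr (Filter.Eventually.of_forall fun ω => real_inner_comm _ _)
  have hI₂c : Integrable (fun ω => ⟪B₂ ω, c⟫) P := by
    have h := Integrable.const_inner (𝕜 := ℝ) c (hBint ξ₂ v₂ hv₂)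
    refine h.congr (Filter.Eventually.of_forall fun ω => real_inner_comm _ _)
  have hI₁w : Integrable (fun ω => ⟪B₁ ω, w ω⟫) P := hinnerS ξ₁ v₁ hv₁ w hw
  have hI₂w : Integrable (fun ω => ⟪B₂ ω, w ω⟫) P := hinnerS ξ₂ v₂ hv₂ w hw
  have hgint : Integrable g P := ((hI₁c.sub hI₂c).add (hI₁w.sub hI₂w))
  -- value of the integral of g
  have hintg : ∫ ω, g ω ∂P = ⟪(∫ ω, B₁ ω ∂P) - ∫ ω, B₂ ω ∂P, c⟫ := by
    have e1 : ∫ ω, ⟪B₁ ω, c⟫ ∂P = ⟪∫ ω, B₁ ω ∂P, c⟫ := by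
      rw [real_inner_comm, ← integral_inner (hBint ξ₁ v₁ hv₁) c]
      exact integral_congr_ae (Filter.Eventually.of_forall fun ω => real_inner_comm _ _)
    have e2 : ∫ ω, ⟪B₂ ω, c⟫ ∂P = ⟪∫ ω, B₂ ω ∂P, c⟫ := by
      rw [real_inner_comm, ← integral_inner (hBint ξ₂ v₂ hv₂) c]
      exact integral_congr_ae (Filter.Eventually.of_forall fun ω => real_inner_comm _ _)
    have e3 : ∫ ω, ⟪B₁ ω, w ω⟫ ∂P = 0 := hsol₁ w hw
    have e4 : ∫ ω, ⟪B₂ ω, w ω⟫ ∂P = 0 := hsol₂ w hw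
    have hIa : Integrable (fun ω => ⟪B₁ ω, c⟫ - ⟪B₂ ω, c⟫) P := hI₁c.sub hI₂c
    have hIb : Integrable (fun ω => ⟪B₁ ω, w ω⟫ - ⟪B₂ ω, w ω⟫) P := hI₁w.sub hI₂w
    simp only [hg]
    rw [integral_add hIa hIb, integral_sub hI₁c hI₂c,
      integral_sub hI₁w hI₂w, e1, e2, e3, e4, inner_sub_left]
    ring
  -- strict positivity
  have hpos : 0 < ∫ ω, g ω ∂P := by
    rcases (integral_nonneg (f := g) hg0).lt_or_eq with h | h
    · exact h
    · exfalso
      have hzero : g =ᵐ[P] 0 := (integral_eq_zero_iff_of_nonneg hg0 hgint).mp h.symm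
      have hae : ∀ᵐ ω ∂P, w ω = ξ₂ - ξ₁ := by
        filter_upwards [hzero] with ω hω
        by_contra hne2
        have hu : (ξ₁ + v₁ ω) ≠ (ξ₂ + v₂ ω) := by
          intro hEq
          apply hne2
          rw [hwω]
          exact sub_eq_sub_iff_add_eq_add.mpr (by rw [add_comm]; exact hEq)
        have hpos' := hAmono ω _ _ hu
        have : g ω = 0 := hω
        rw [hgpt ω] at this
        rw [this] at hpos'
        exact lt_irrefl _ hpos'
      have hint : ∫ ω, w ω ∂P = ξ₂ - ξ₁ := by
        rw [integral_congr_ae hae]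
        simp
      rw [hSmean w hw] at hint
      exact hne (sub_eq_zero.mp hint.symm).symm
  calc (0:ℝ) < ∫ ω, g ω ∂P := hpos
    _ = _ := hintg
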